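/- Let the prior on α > 0 be Stirling-gamma SG(a, b, n), i.e., p(α) ∝ α^{a−1}/(∏_{r=0}^{n−1}(α+r))^b, and let the conditional likelihood of a single observed partition Π_n of {1,…,n} with K blocks be proportional (in α) to α^{K}/∏_{r=0}^{n−1}(α+r). Then the posterior density of α given Π_n is Stirling-gamma SG(a + K, b + 1, n). -/

import Mathlib

open MeasureTheory

/-- The unnormalized Stirling-gamma kernel of `SG(a, b, m)`. -/
noncomputable def sgKernel (a b : ℝ) (m : ℕ) (α : ℝ) : ℝ :=
  α ^ (a - 1) / (∏ r ∈ Finset.range m, (α + r)) ^ b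

/-- The Stirling-gamma `SG(a, b, m)` density. -/
noncomputable def sgPdf (a b : ℝ) (m : ℕ) (α : ℝ) : ℝ :=
  sgKernel a b m α / ∫ x in Set.Ioi (0:ℝ), sgKernel a b m x

/-- The `α`-dependent part of the Dirichlet-process partition likelihood for a partition
of `{1,…,n}` with `K` blocks. -/
noncomputable def dpPartitionLik (n K : ℕ) (α : ℝ) : ℝ :=
  α ^ (K : ℝ) / ∏ r ∈ Finset.range n, (α + r)

lemma sg_prod_pos {x : ℝ} (hx : 0 < x) (n : ℕ) :
    0 < ∏ r ∈ Finset.range n, (x + r) :=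
  Finset.prod_pos fun r _ => by positivity

lemma sgKernel_pos {a b : ℝ} {n : ℕ} {x : ℝ} (hx : 0 < x) : 0 < sgKernel a b n x := by
  have := sg_prod_pos hx n
  unfold sgKernel
  positivity

lemma sgKernel_measurable (a b : ℝ) (n : ℕ) : Measurable (sgKernel a b n) := by
  unfold sgKernel
  measurability

lemma sgKernel_mul_lik {a b : ℝ} {n K : ℕ} {x : ℝ} (hx : 0 < x) :
    sgKernel a b n x * dpPartitionLik n K x = sgKernel (a + K) (b + 1) n x := by
  have hP := sg_prod_pos hx n
  unfold sgKernel dpPartitionLik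
  rw [div_mul_div_comm, ← Real.rpow_add hx, ← Real.rpow_add_one hP.ne']
  ring_nf

/-- Lower bound on the Pochhammer product: it is at least `x`. -/
lemma sg_prod_ge_self {x : ℝ} (hx : 0 < x) {n : ℕ} (hn : 1 ≤ n) :
    x ≤ ∏ r ∈ Finset.range n, (x + r) := by
  obtain ⟨m, rfl⟩ : ∃ m, n = m + 1 := ⟨n - 1, (Nat.succ_pred_eq_of_pos hn).symm⟩
  rw [Finset.prod_range_succ']
  have h1 : (1:ℝ) ≤ ∏ i ∈ Finset.range m, (x + ((i + 1 : ℕ) : ℝ)) := by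
    calc (1:ℝ) = ∏ _i ∈ Finset.range m, (1:ℝ) := by simp
      _ ≤ _ := by
        apply Finset.prod_le_prod (fun i _ => zero_le_one)
        intro i _
        have : (1:ℝ) ≤ ((i + 1 : ℕ) : ℝ) := by exact_mod_cast Nat.one_le_iff_ne_zero.2 (Nat.succ_ne_zero i)
        linarith
  calc x = 1 * x := (one_mul x).symm
    _ ≤ (∏ i ∈ Finset.range m, (x + ((i + 1 : ℕ) : ℝ))) * (x + (0:ℕ)) := by
        rw [Nat.cast_zero, add_zero]
        exact mul_le_mul_of_nonneg_right h1 hx.le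
    _ = _ := by norm_num

/-- Lower bound on the Pochhammer product: it is at least `x ^ n`. -/
lemma sg_prod_ge_pow {x : ℝ} (hx : 0 < x) (n : ℕ) :
    x ^ n ≤ ∏ r ∈ Finset.range n, (x + r) := by
  calc x ^ n = ∏ _r ∈ Finset.range n, x := by rw [Finset.prod_const, Finset.card_range]
    _ ≤ _ := Finset.prod_le_prod (fun r _ => hx.le) (fun r _ => le_add_of_nonneg_right r.cast_nonneg)

/-- Integrability of the Stirling-gamma kernel. -/
lemma sgKernel_integrable {a b : ℝ} (n : ℕ) (hn : 1 ≤ n) (hb : 0 < b) (hab : b < a)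
    (hbn : a < b * n) :
    IntegrableOn (sgKernel a b n) (Set.Ioi (0:ℝ)) := by
  have h1 : IntegrableOn (sgKernel a b n) (Set.Ioo (0:ℝ) 1) := by
    have hg : IntegrableOn (fun x : ℝ => x ^ (a - b - 1)) (Set.Ioo (0:ℝ) 1) :=
      (intervalIntegral.integrableOn_Ioo_rpow_iff one_pos).2 (by linarith)
    refine MeasureTheory.Integrable.mono hg ((sgKernel_measurable a b n).aestronglyMeasurable) ?_
    filter_upwards [ae_restrict_mem measurableSet_Ioo] with x hx
    have hx0 : 0 < x := hx.1
    have hP : x ^ b ≤ (∏ r ∈ Finset.range n, (x + r)) ^ b :=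
      Real.rpow_le_rpow hx0.le (sg_prod_ge_self hx0 hn) hb.le
    rw [Real.norm_eq_abs, Real.norm_eq_abs, abs_of_nonneg (sgKernel_pos hx0).le,
      abs_of_nonneg (Real.rpow_nonneg hx0.le _)]
    calc sgKernel a b n x ≤ x ^ (a - 1) / x ^ b := by
          unfold sgKernel
          exact div_le_div_of_nonneg_left (Real.rpow_nonneg hx0.le _)
            (Real.rpow_pos_of_pos hx0 b) hP
      _ = x ^ (a - b - 1) := by
          rw [← Real.rpow_sub hx0]; ring_nf
  have h2 : IntegrableOn (sgKernel a b n) (Set.Ici (1:ℝ)) := by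
    rw [integrableOn_Ici_iff_integrableOn_Ioi]
    have hg : IntegrableOn (fun x : ℝ => x ^ (a - 1 - ↑n * b)) (Set.Ioi (1:ℝ)) := by
      apply (integrableOn_Ioi_rpow_iff one_pos).2
      nlinarith
    refine MeasureTheory.Integrable.mono hg ((sgKernel_measurable a b n).aestronglyMeasurable) ?_
    filter_upwards [ae_restrict_mem measurableSet_Ioi] with x hx
    have hx0 : (0:ℝ) < x := lt_of_lt_of_le one_pos (le_of_lt hx)
    have hpow : x ^ (↑n * b) ≤ (∏ r ∈ Finset.range n, (x + r)) ^ b := by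
      rw [Real.rpow_mul hx0.le, Real.rpow_natCast]
      exact Real.rpow_le_rpow (by positivity) (sg_prod_ge_pow hx0 n) hb.le
    rw [Real.norm_eq_abs, Real.norm_eq_abs, abs_of_nonneg (sgKernel_pos hx0).le,
      abs_of_nonneg (Real.rpow_nonneg hx0.le _)]
    calc sgKernel a b n x ≤ x ^ (a - 1) / x ^ (↑n * b) := by
          unfold sgKernel
          exact div_le_div_of_nonneg_left (Real.rpow_nonneg hx0.le _)
            (Real.rpow_pos_of_pos hx0 _) hpow
      _ = x ^ (a - 1 - ↑n * b) := by rw [← Real.rpow_sub hx0]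
  have := h1.union h2
  rwa [Set.Ioo_union_Ici_eq_Ioi one_pos] at this

/-- Conjugacy of the Stirling-gamma prior: with prior `SG(a, b, n)` on `α` and a single
observed partition of `{1,…,n}` with `K` blocks, the posterior density of `α` is the
`SG(a + K, b + 1, n)` density. -/
theorem stirling_gamma_conjugacy
    (n K : ℕ) (hn : 1 ≤ n) (hK1 : 1 ≤ K) (hKn : K ≤ n)
    (a b : ℝ) (ha : 0 < a) (hb : 0 < b) (hab1 : 1 < a / b) (habn : a / b < n)
    (α : ℝ) (hα : 0 < α) :
    (sgPdf a b n α * dpPartitionLik n K α) /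
        (∫ x in Set.Ioi (0:ℝ), sgPdf a b n x * dpPartitionLik n K x) =
      sgPdf (a + K) (b + 1) n α := by
  have hab : b < a := by rwa [lt_div_iff₀ hb, one_mul] at hab1
  have hbn : a < b * n := by rw [div_lt_iff₀ hb] at habn; linarith
  have hint : IntegrableOn (sgKernel a b n) (Set.Ioi (0:ℝ)) :=
    sgKernel_integrable n hn hb hab hbn
  have hZpos : 0 < ∫ x in Set.Ioi (0:ℝ), sgKernel a b n x := by
    rw [setIntegral_pos_iff_support_of_nonneg_ae ?_ hint]
    · refine lt_of_lt_of_le ?_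
        (measure_mono (fun x hx => ⟨(sgKernel_pos hx).ne', hx⟩ :
          Set.Ioi (0:ℝ) ⊆ Function.support (sgKernel a b n) ∩ Set.Ioi 0))
      simp
    · filter_upwards [ae_restrict_mem measurableSet_Ioi] with x hx
      exact (sgKernel_pos hx).le
  set Z := ∫ x in Set.Ioi (0:ℝ), sgKernel a b n x with hZ
  have key : ∀ x ∈ Set.Ioi (0:ℝ),
      sgPdf a b n x * dpPartitionLik n K x = sgKernel (a + K) (b + 1) n x / Z := by
    intro x hx
    rw [sgPdf, div_mul_eq_mul_div, sgKernel_mul_lik hx]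
  rw [setIntegral_congr_fun measurableSet_Ioi key, integral_div, key α hα,
    sgPdf, div_div_div_comm, div_self hZpos.ne', div_one]
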